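/- (Main factorization, almost square case n = m+1) Let P(x), Q(y) be m×(m+1) polynomial matrices such that Q_{i,j}(y) = q_{j−1}(y) for all i+1 ≥ j (with q_0 = 1 and q_k monic of degree k), and P_{i,j}(x) = p_{i−1}(x) for all i+1 < j (with p_0 = 1 and p_k monic of degree k), the remaining entries being arbitrary polynomials. Then for any points x1,...,xm and y1,...,y_{m+1}, the Vandermonde determinant of the m(m+1) bivariate polynomials P_{i,j}(x)Q_{i,j}(y) at the m(m+1) grid points (x_k, y_l) equals ± (∏_{j=1}^{m+1} det[P_{i,j}(x_k)]_{k,i=1}^m) · (∏_{i=1}^{m} det[Q_{i,j}(y_l)]_{l,j=1}^{m+1}). -/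

import Mathlib

open Polynomial Matrix Finset Kronecker

/-- If the columns of `A` outside `Pd` are standard basis columns, the determinant
equals that of the principal submatrix on `Pd`. -/
lemma det_eq_det_subtype {n : Type*} [Fintype n] [DecidableEq n] (A : Matrix n n ℝ)
    (Pd : n → Prop) [DecidablePred Pd]
    (h : ∀ c, ¬ Pd c → ∀ r, A r c = if r = c then 1 else 0) :
    A.det = (A.submatrix (Subtype.val : {x // Pd x} → n) Subtype.val).det := by
  classical
  set e : {x // Pd x} ⊕ {x // ¬ Pd x} ≃ n := Equiv.sumCompl Pd with he
  have hA : A.submatrix e e = Matrix.fromBlocks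
      (A.submatrix Subtype.val Subtype.val) 0
      (A.submatrix Subtype.val Subtype.val) 1 := by
    ext rc c
    rcases rc with ⟨r, hr⟩ | ⟨r, hr⟩ <;> rcases c with ⟨c, hc⟩ | ⟨c, hc⟩ <;>
      simp only [submatrix_apply, he, Equiv.sumCompl_apply_inl, Equiv.sumCompl_apply_inr,
        fromBlocks_apply₁₁, fromBlocks_apply₁₂, fromBlocks_apply₂₁, fromBlocks_apply₂₂,
        Matrix.zero_apply, Matrix.one_apply]
    · rw [h c hc r]
      have : r ≠ c := fun hrc => hc (hrc ▸ hr)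
      simp [this]
    · rw [h c hc r]
      by_cases hrc : r = c <;> simp [hrc, Subtype.ext_iff]
  calc A.det = (A.submatrix e e).det := (Matrix.det_submatrix_equiv_self e A).symm
    _ = _ := by rw [hA, Matrix.det_fromBlocks_zero₁₂, Matrix.det_one, mul_one]

/-- Expansion of a family of polynomials of degree < N in a monic triangular basis,
with the expansion of a basis element being a delta vector. -/
lemma expand_in_basis (N : ℕ) (p : Fin N → Polynomial ℝ)
    (hp : ∀ k, (p k).Monic ∧ (p k).natDegree = (k : ℕ))
    {ι : Type*} (F : ι → Polynomial ℝ) (hF : ∀ c, (F c).degree < (N : WithBot ℕ)) :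
    ∃ A : Fin N → ι → ℝ,
      (∀ c, F c = ∑ a, A a c • p a) ∧
      (∀ c (i : Fin N), F c = p i → ∀ a, A a c = if a = i then 1 else 0) := by
  classical
  set Cm : Matrix (Fin N) (Fin N) ℝ := Matrix.of fun a a' => (p a').coeff a with hCm
  have hCtri : Cm.BlockTriangular id := by
    intro a a' hlt
    exact Polynomial.coeff_eq_zero_of_natDegree_lt (by rw [(hp a').2]; exact_mod_cast hlt)
  have hdet : Cm.det = 1 := by
    rw [Matrix.det_of_upperTriangular hCtri]
    refine Finset.prod_eq_one fun a _ => ?_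
    show (p a).coeff a = 1
    have := (hp a).1
    rw [← (hp a).2]
    exact this.coeff_natDegree
  have hu : IsUnit Cm.det := by rw [hdet]; exact isUnit_one
  set Pc : Matrix (Fin N) ι ℝ := Matrix.of fun a c => (F c).coeff a with hPc
  refine ⟨fun a c => (Cm⁻¹ * Pc) a c, ?_, ?_⟩
  · intro c
    apply Polynomial.ext fun n => ?_
    rw [Polynomial.finset_sum_coeff]
    simp only [Polynomial.coeff_smul, smul_eq_mul]
    by_cases hn : n < N
    · calc (F c).coeff n = Pc ⟨n, hn⟩ c := rfl
        _ = (Cm * (Cm⁻¹ * Pc)) ⟨n, hn⟩ c := by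
              rw [Matrix.mul_nonsing_inv_cancel_left Cm Pc hu]
        _ = ∑ a, (Cm⁻¹ * Pc) a c * (p a).coeff n := by
              rw [Matrix.mul_apply]
              exact Finset.sum_congr rfl fun a _ => mul_comm _ _
    · have h1 : (F c).coeff n = 0 := by
        refine Polynomial.coeff_eq_zero_of_degree_lt (lt_of_lt_of_le (hF c) ?_)
        exact_mod_cast Nat.le_of_not_lt hn
      have h2 : ∀ a : Fin N, (p a).coeff n = 0 := fun a =>
        Polynomial.coeff_eq_zero_of_natDegree_lt (by rw [(hp a).2]; omega)
      simp [h1, h2]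
  · intro c i hci a
    calc (Cm⁻¹ * Pc) a c = ∑ b, Cm⁻¹ a b * Cm b i := by
          rw [Matrix.mul_apply]
          refine Finset.sum_congr rfl fun b _ => ?_
          congr 1
          show (F c).coeff b = (p i).coeff b
          rw [hci]
      _ = (Cm⁻¹ * Cm) a i := (Matrix.mul_apply).symm
      _ = (1 : Matrix (Fin N) (Fin N) ℝ) a i := by rw [Matrix.nonsing_inv_mul Cm hu]
      _ = if a = i then 1 else 0 := Matrix.one_apply

lemma block_det (m : ℕ) (A : Fin m → Fin m × Fin (m+1) → ℝ)
    (B : Fin (m+1) → Fin m × Fin (m+1) → ℝ)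
    (hA : ∀ (i : Fin m) (j : Fin (m+1)), (i:ℕ)+1 < (j:ℕ) → ∀ a, A a (i,j) = if a = i then 1 else 0)
    (hB : ∀ (i : Fin m) (j : Fin (m+1)), (j:ℕ) ≤ (i:ℕ)+1 → ∀ b, B b (i,j) = if b = j then 1 else 0) :
    (Matrix.of fun (r c : Fin m × Fin (m+1)) => A r.1 c * B r.2 c).det =
    (∏ j, (Matrix.of fun a i => A a (i,j)).det) * ∏ i, (Matrix.of fun b j => B b (i,j)).det := by
  classical
  set T := Matrix.of fun (r c : Fin m × Fin (m+1)) => A r.1 c * B r.2 c with hT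
  set bg : Fin m × Fin (m+1) → ℕ :=
    fun c => if (c.2:ℕ) ≤ (c.1:ℕ)+1 then 2*(c.2:ℕ) else 2*(c.1:ℕ)+3 with hbg
  have htri : T.BlockTriangular bg := by
    rintro ⟨a, β⟩ ⟨i, j⟩ hlt
    show A a (i,j) * B β (i,j) = 0
    simp only [hbg] at hlt
    by_cases hL : (j:ℕ) ≤ (i:ℕ)+1
    · rw [hB i j hL β]
      by_cases hβ : β = j
      · exfalso; subst hβ; split_ifs at hlt <;> omega
      · simp [hβ]
    · rw [hA i j (by omega) a]
      by_cases ha : a = i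
      · exfalso; subst ha; split_ifs at hlt <;> omega
      · simp [ha]
  rw [htri.det]
  set S1 := Finset.image (fun j : Fin (m+1) => 2*(j:ℕ)) Finset.univ with hS1
  set S2 := Finset.image (fun i : Fin m => 2*(i:ℕ)+3) Finset.univ with hS2
  have hsub : Finset.image bg Finset.univ ⊆ S1 ∪ S2 := by
    intro v hv
    simp only [Finset.mem_image, Finset.mem_univ, true_and] at hv
    obtain ⟨⟨a, β⟩, rfl⟩ := hv
    simp only [hbg, hS1, hS2, Finset.mem_union, Finset.mem_image, Finset.mem_univ, true_and]
    split_ifs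
    · exact Or.inl ⟨β, rfl⟩
    · exact Or.inr ⟨a, rfl⟩
  have hone : ∀ v ∈ S1 ∪ S2, v ∉ Finset.image bg Finset.univ →
      (T.toSquareBlock bg v).det = 1 := by
    intro v _ hv
    haveI : IsEmpty {c : Fin m × Fin (m+1) // bg c = v} := by
      constructor; rintro ⟨c, hc⟩
      exact hv (Finset.mem_image.mpr ⟨c, Finset.mem_univ c, hc⟩)
    exact Matrix.det_isEmpty
  rw [Finset.prod_subset hsub hone]
  have hdisj : Disjoint S1 S2 := by
    rw [Finset.disjoint_left]
    intro v hv1 hv2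
    simp only [hS1, hS2, Finset.mem_image, Finset.mem_univ, true_and] at hv1 hv2
    obtain ⟨j, rfl⟩ := hv1; obtain ⟨i, hi⟩ := hv2; omega
  rw [Finset.prod_union hdisj, hS1, hS2,
    Finset.prod_image (fun j _ j' _ h => Fin.ext (by omega)),
    Finset.prod_image (fun i _ i' _ h => Fin.ext (by omega))]
  have hJ : ∀ j : Fin (m+1), (T.toSquareBlock bg (2*(j:ℕ))).det =
      (Matrix.of fun a i => A a (i,j)).det := by
    intro j
    have hsub1 := det_eq_det_subtype (Matrix.of fun a i => A a (i,j))
      (fun i : Fin m => (j:ℕ) ≤ (i:ℕ)+1) (fun c hc r => hA c j (by omega) r)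
    let ej : {i : Fin m // (j:ℕ) ≤ (i:ℕ)+1} ≃ {c : Fin m × Fin (m+1) // bg c = 2*(j:ℕ)} :=
      { toFun := fun i => ⟨(i.1, j), by simp only [hbg]; rw [if_pos i.2]⟩
        invFun := fun c => ⟨c.1.1, by
          have hc := c.2
          simp only [hbg] at hc
          split_ifs at hc <;> omega⟩
        left_inv := fun i => rfl
        right_inv := fun c => by
          obtain ⟨⟨a, β⟩, hc⟩ := c
          apply Subtype.ext
          simp only [hbg] at hc
          have hβ : (β:ℕ) = (j:ℕ) := by split_ifs at hc <;> omega
          exact Prod.ext rfl (Fin.ext hβ.symm) }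
    rw [hsub1, ← Matrix.det_submatrix_equiv_self ej (T.toSquareBlock bg (2*(j:ℕ)))]
    congr 1
    ext ⟨r, hr⟩ ⟨c, hc⟩
    show A r (c, j) * B j (c, j) = A r (c, j)
    rw [hB c j hc j]
    simp
  have hI : ∀ i : Fin m, (T.toSquareBlock bg (2*(i:ℕ)+3)).det =
      (Matrix.of fun b j => B b (i,j)).det := by
    intro i
    have hsub1 := det_eq_det_subtype (Matrix.of fun b j => B b (i,j))
      (fun j : Fin (m+1) => (i:ℕ)+1 < (j:ℕ)) (fun c hc r => hB i c (by omega) r)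
    let ei : {j : Fin (m+1) // (i:ℕ)+1 < (j:ℕ)} ≃ {c : Fin m × Fin (m+1) // bg c = 2*(i:ℕ)+3} :=
      { toFun := fun j => ⟨(i, j.1), by
          simp only [hbg]
          rw [if_neg (by have := j.2; omega)]⟩
        invFun := fun c => ⟨c.1.2, by
          have hc := c.2
          simp only [hbg] at hc
          split_ifs at hc <;> omega⟩
        left_inv := fun j => rfl
        right_inv := fun c => by
          obtain ⟨⟨a, β⟩, hc⟩ := c
          apply Subtype.ext
          simp only [hbg] at hc
          have ha : (a:ℕ) = (i:ℕ) := by split_ifs at hc <;> omega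
          exact Prod.ext (Fin.ext ha.symm) rfl }
    rw [hsub1, ← Matrix.det_submatrix_equiv_self ei (T.toSquareBlock bg (2*(i:ℕ)+3))]
    congr 1
    ext ⟨r, hr⟩ ⟨c, hc⟩
    show A i (i, c) * B r (i, c) = B r (i, c)
    rw [hA i c hc i]
    simp
  rw [Finset.prod_congr rfl (fun j _ => hJ j), Finset.prod_congr rfl (fun i _ => hI i)]

theorem stmt6 (m : ℕ) (P Q : Fin m → Fin (m + 1) → Polynomial ℝ)
    (p : Fin m → Polynomial ℝ) (q : Fin (m + 1) → Polynomial ℝ)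
    (hp0 : ∀ h : 0 < m, p ⟨0, h⟩ = 1) (hq0 : q 0 = 1)
    (hpm : ∀ k : Fin m, (p k).Monic ∧ (p k).natDegree = (k : ℕ))
    (hqm : ∀ k : Fin (m + 1), (q k).Monic ∧ (q k).natDegree = (k : ℕ))
    (hQ : ∀ (i : Fin m) (j : Fin (m + 1)), (j : ℕ) ≤ (i : ℕ) + 1 → Q i j = q j)
    (hP : ∀ (i : Fin m) (j : Fin (m + 1)), (i : ℕ) + 1 < (j : ℕ) → P i j = p i)
    (x : Fin m → ℝ) (y : Fin (m + 1) → ℝ) :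
    ∃ ε : ℝ, (ε = 1 ∨ ε = -1) ∧
      Matrix.det (Matrix.of fun (kl ij : Fin m × Fin (m + 1)) =>
          (P ij.1 ij.2).eval (x kl.1) * (Q ij.1 ij.2).eval (y kl.2)) =
      ε * (∏ j : Fin (m + 1),
              Matrix.det (Matrix.of fun k i : Fin m => (P i j).eval (x k))) *
          (∏ i : Fin m,
              Matrix.det (Matrix.of fun l j : Fin (m + 1) => (Q i j).eval (y l))) := by
  classical
  refine ⟨1, Or.inl rfl, ?_⟩
  -- the annihilator polynomials of the grids
  set f : Polynomial ℝ := ∏ k, (X - C (x k)) with hfdef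
  set g : Polynomial ℝ := ∏ l, (X - C (y l)) with hgdef
  have hfm : f.Monic := monic_prod_of_monic _ _ fun k _ => monic_X_sub_C _
  have hgm : g.Monic := monic_prod_of_monic _ _ fun l _ => monic_X_sub_C _
  have hfdeg : f.degree = (m : WithBot ℕ) := by
    rw [hfdef, degree_prod]
    simp [degree_X_sub_C]
  have hgdeg : g.degree = ((m + 1 : ℕ) : WithBot ℕ) := by
    rw [hgdef, degree_prod]
    simp [degree_X_sub_C]
  have hfeval : ∀ k, f.eval (x k) = 0 := fun k => by
    rw [hfdef, eval_prod]
    exact Finset.prod_eq_zero (Finset.mem_univ k) (by simp)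
  have hgeval : ∀ l, g.eval (y l) = 0 := fun l => by
    rw [hgdef, eval_prod]
    exact Finset.prod_eq_zero (Finset.mem_univ l) (by simp)
  have hPeval : ∀ i j k, (P i j %ₘ f).eval (x k) = (P i j).eval (x k) := by
    intro i j k
    conv_rhs => rw [← modByMonic_add_div (P i j) f]
    simp [hfeval k]
  have hQeval : ∀ i j l, (Q i j %ₘ g).eval (y l) = (Q i j).eval (y l) := by
    intro i j l
    conv_rhs => rw [← modByMonic_add_div (Q i j) g]
    simp [hgeval l]
  obtain ⟨A, hA1, hA2⟩ := expand_in_basis m p hpm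
    (fun c : Fin m × Fin (m+1) => P c.1 c.2 %ₘ f)
    (fun c => hfdeg ▸ degree_modByMonic_lt _ hfm)
  obtain ⟨B, hB1, hB2⟩ := expand_in_basis (m+1) q hqm
    (fun c : Fin m × Fin (m+1) => Q c.1 c.2 %ₘ g)
    (fun c => hgdeg ▸ degree_modByMonic_lt _ hgm)
  have hAδ : ∀ (i : Fin m) (j : Fin (m+1)), (i:ℕ)+1 < (j:ℕ) →
      ∀ a, A a (i,j) = if a = i then 1 else 0 := by
    intro i j hij a
    refine hA2 (i,j) i ?_ a
    show P i j %ₘ f = p i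
    rw [hP i j hij, (modByMonic_eq_self_iff hfm).2]
    rw [hfdeg, degree_eq_natDegree (hpm i).1.ne_zero, (hpm i).2]
    exact_mod_cast i.isLt
  have hBδ : ∀ (i : Fin m) (j : Fin (m+1)), (j:ℕ) ≤ (i:ℕ)+1 →
      ∀ b, B b (i,j) = if b = j then 1 else 0 := by
    intro i j hij b
    refine hB2 (i,j) j ?_ b
    show Q i j %ₘ g = q j
    rw [hQ i j hij, (modByMonic_eq_self_iff hgm).2]
    rw [hgdeg, degree_eq_natDegree (hqm j).1.ne_zero, (hqm j).2]
    exact_mod_cast j.isLt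
  have hPx : ∀ (i : Fin m) (j : Fin (m+1)) k,
      (P i j).eval (x k) = ∑ a, A a (i,j) * (p a).eval (x k) := by
    intro i j k
    have h1 : P i j %ₘ f = ∑ a, A a (i,j) • p a := hA1 (i,j)
    rw [← hPeval i j k, h1]
    simp [eval_finset_sum]
  have hQy : ∀ (i : Fin m) (j : Fin (m+1)) l,
      (Q i j).eval (y l) = ∑ b, B b (i,j) * (q b).eval (y l) := by
    intro i j l
    have h1 : Q i j %ₘ g = ∑ b, B b (i,j) • q b := hB1 (i,j)
    rw [← hQeval i j l, h1]
    simp [eval_finset_sum]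
  have hM : (Matrix.of fun (kl ij : Fin m × Fin (m + 1)) =>
      (P ij.1 ij.2).eval (x kl.1) * (Q ij.1 ij.2).eval (y kl.2)) =
      ((Matrix.of fun k a => (p a).eval (x k)) ⊗ₖ (Matrix.of fun l b => (q b).eval (y l))) *
      (Matrix.of fun (r c : Fin m × Fin (m+1)) => A r.1 c * B r.2 c) := by
    ext ⟨k, l⟩ ⟨i, j⟩
    simp only [Matrix.mul_apply, Matrix.of_apply, Matrix.kroneckerMap_apply]
    rw [Fintype.sum_prod_type, hPx i j k, hQy i j l, Finset.sum_mul_sum]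
    exact Finset.sum_congr rfl fun a _ => Finset.sum_congr rfl fun b _ => by
      dsimp only; ring
  have hfac1 : ∀ j : Fin (m+1), (Matrix.of fun k i : Fin m => (P i j).eval (x k)) =
      (Matrix.of fun k a => (p a).eval (x k)) * (Matrix.of fun a i => A a (i,j)) := by
    intro j
    ext k i
    simp only [Matrix.of_apply, Matrix.mul_apply]
    rw [hPx i j k]
    exact Finset.sum_congr rfl fun a _ => mul_comm _ _
  have hfac2 : ∀ i : Fin m, (Matrix.of fun l j : Fin (m+1) => (Q i j).eval (y l)) =
      (Matrix.of fun l b => (q b).eval (y l)) * (Matrix.of fun b j => B b (i,j)) := by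
    intro i
    ext l j
    simp only [Matrix.of_apply, Matrix.mul_apply]
    rw [hQy i j l]
    exact Finset.sum_congr rfl fun b _ => mul_comm _ _
  have e1 : (∏ j : Fin (m+1), (Matrix.of fun k i : Fin m => (P i j).eval (x k)).det)
      = (Matrix.of fun k a => (p a).eval (x k)).det ^ (m+1) *
        ∏ j, (Matrix.of fun a i => A a (i,j)).det := by
    calc (∏ j : Fin (m+1), (Matrix.of fun k i : Fin m => (P i j).eval (x k)).det)
        = ∏ j : Fin (m+1), ((Matrix.of fun k a => (p a).eval (x k)).det *
            (Matrix.of fun a i => A a (i,j)).det) :=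
          Finset.prod_congr rfl fun j _ => by rw [hfac1 j, Matrix.det_mul]
      _ = _ := by
          rw [Finset.prod_mul_distrib, Finset.prod_const, Finset.card_univ, Fintype.card_fin]
  have e2 : (∏ i : Fin m, (Matrix.of fun l j : Fin (m+1) => (Q i j).eval (y l)).det)
      = (Matrix.of fun l b => (q b).eval (y l)).det ^ m *
        ∏ i, (Matrix.of fun b j => B b (i,j)).det := by
    calc (∏ i : Fin m, (Matrix.of fun l j : Fin (m+1) => (Q i j).eval (y l)).det)
        = ∏ i : Fin m, ((Matrix.of fun l b => (q b).eval (y l)).det *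
            (Matrix.of fun b j => B b (i,j)).det) :=
          Finset.prod_congr rfl fun i _ => by rw [hfac2 i, Matrix.det_mul]
      _ = _ := by
          rw [Finset.prod_mul_distrib, Finset.prod_const, Finset.card_univ, Fintype.card_fin]
  rw [hM, Matrix.det_mul, Matrix.det_kronecker, block_det m A B hAδ hBδ, e1, e2]
  simp only [Fintype.card_fin]
  ring
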